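/- For p(t) = 1 - t + t^2 and any n ≥ 1, |∏_{ω^n = 1} p(ω)| depends only on n mod 6: it equals 0 if n ≡ 0 mod 6, 1 if n ≡ ±1 mod 6, 3 if n ≡ ±2 mod 6, and 4 if n ≡ 3 mod 6, where the product is over complex n-th roots of unity. -/

import Mathlib

open Polynomial

lemma prod_sub_nthRoots (n : ℕ) (hn : 1 ≤ n) (c : ℂ) :
    ((nthRoots n (1 : ℂ)).map (fun ω => c - ω)).prod = c ^ n - 1 := by
  have hm : (X ^ n - C (1:ℂ)).Monic := monic_X_pow_sub_C _ (by omega)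
  have h := (IsAlgClosed.splits (X ^ n - C (1:ℂ))).eq_prod_roots_of_monic hm
  have := congrArg (eval c) h
  simp [eval_multiset_prod, nthRoots, Multiset.map_map] at this ⊢
  simpa using this.symm

theorem trefoil_homology_orders (n : ℕ) (hn : 1 ≤ n) :
    (n % 6 = 0 →
      ‖((Polynomial.nthRoots n (1 : ℂ)).map fun ω => 1 - ω + ω ^ 2).prod‖ = 0) ∧
    ((n % 6 = 1 ∨ n % 6 = 5) →
      ‖((Polynomial.nthRoots n (1 : ℂ)).map fun ω => 1 - ω + ω ^ 2).prod‖ = 1) ∧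
    ((n % 6 = 2 ∨ n % 6 = 4) →
      ‖((Polynomial.nthRoots n (1 : ℂ)).map fun ω => 1 - ω + ω ^ 2).prod‖ = 3) ∧
    (n % 6 = 3 →
      ‖((Polynomial.nthRoots n (1 : ℂ)).map fun ω => 1 - ω + ω ^ 2).prod‖ = 4) := by
  set w : ℂ := ⟨1/2, Real.sqrt 3 / 2⟩ with hw
  set v : ℂ := ⟨1/2, -(Real.sqrt 3 / 2)⟩ with hv
  have hs : Real.sqrt 3 * Real.sqrt 3 = 3 :=
    Real.mul_self_sqrt (by norm_num)
  have h1 : w + v = 1 := by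
    apply Complex.ext <;> simp [hw, hv] <;> norm_num
  have h2 : w * v = 1 := by
    apply Complex.ext <;> simp [hw, hv, Complex.mul_re, Complex.mul_im] <;> nlinarith [hs]
  have hfac : ∀ ω : ℂ, 1 - ω + ω ^ 2 = (w - ω) * (v - ω) := by
    intro ω; linear_combination ω * h1 - h2
  have hprod : ((Polynomial.nthRoots n (1 : ℂ)).map fun ω => 1 - ω + ω ^ 2).prod
      = (w ^ n - 1) * (v ^ n - 1) := by
    calc ((Polynomial.nthRoots n (1 : ℂ)).map fun ω => 1 - ω + ω ^ 2).prod
        = ((Polynomial.nthRoots n (1 : ℂ)).map fun ω => (w - ω) * (v - ω)).prod := by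
          simp only [hfac]
      _ = ((Polynomial.nthRoots n (1 : ℂ)).map fun ω => (w - ω)).prod *
          ((Polynomial.nthRoots n (1 : ℂ)).map fun ω => (v - ω)).prod := by
          rw [← Multiset.prod_map_mul]
      _ = (w ^ n - 1) * (v ^ n - 1) := by
          rw [prod_sub_nthRoots n hn, prod_sub_nthRoots n hn]
  have hw2 : w ^ 2 = w - 1 := by linear_combination w * h1 - h2
  have hv2 : v ^ 2 = v - 1 := by linear_combination v * h1 - h2
  have hw3 : w ^ 3 = -1 := by linear_combination (w + 1) * hw2
  have hv3 : v ^ 3 = -1 := by linear_combination (v + 1) * hv2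
  have hw4 : w ^ 4 = -w := by linear_combination w * hw3
  have hv4 : v ^ 4 = -v := by linear_combination v * hv3
  have hw5 : w ^ 5 = 1 - w := by linear_combination w ^ 2 * hw3 - hw2
  have hv5 : v ^ 5 = 1 - v := by linear_combination v ^ 2 * hv3 - hv2
  have hw6 : w ^ 6 = 1 := by linear_combination (w ^ 3 - 1) * hw3
  have hv6 : v ^ 6 = 1 := by linear_combination (v ^ 3 - 1) * hv3
  have hwn : w ^ n = w ^ (n % 6) := by
    conv_lhs => rw [← Nat.div_add_mod n 6]
    rw [pow_add, pow_mul, hw6, one_pow, one_mul]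
  have hvn : v ^ n = v ^ (n % 6) := by
    conv_lhs => rw [← Nat.div_add_mod n 6]
    rw [pow_add, pow_mul, hv6, one_pow, one_mul]
  refine ⟨fun h => ?_, fun h => ?_, fun h => ?_, fun h => ?_⟩
  · rw [hprod, hwn, hvn, h]
    norm_num
  · rcases h with h | h
    · have : (w ^ n - 1) * (v ^ n - 1) = 1 := by
        rw [hwn, hvn, h, pow_one, pow_one]; linear_combination h2 - h1
      rw [hprod, this]; simp
    · have : (w ^ n - 1) * (v ^ n - 1) = 1 := by
        rw [hwn, hvn, h, hw5, hv5]; linear_combination h2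
      rw [hprod, this]; simp
  · rcases h with h | h
    · have : (w ^ n - 1) * (v ^ n - 1) = 3 := by
        rw [hwn, hvn, h, hw2, hv2]; linear_combination h2 - 2 * h1
      rw [hprod, this]; simp
    · have : (w ^ n - 1) * (v ^ n - 1) = 3 := by
        rw [hwn, hvn, h, hw4, hv4]; linear_combination h2 + h1
      rw [hprod, this]; simp
  · have : (w ^ n - 1) * (v ^ n - 1) = 4 := by
      rw [hwn, hvn, h, hw3, hv3]; norm_num
    rw [hprod, this]; simp
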